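/- The dimension of the minimal nonzero nilpotent adjoint orbit of a finite-dimensional complex simple Lie algebra equals 2h∨ − 2, where h∨ is the dual Coxeter number. -/

import Mathlib

open RealInnerProductSpace Finset
open scoped Classical

/-- The data of a reduced irreducible (crystallographic) root system of a
finite-dimensional complex simple Lie algebra, realized in a real inner
product space, together with a choice of positive roots and the highest
root `θ`, with the invariant form normalized so that `(θ,θ) = 2`. -/
structure SimpleRootData (V : Type*) [NormedAddCommGroup V]
    [InnerProductSpace ℝ V] [FiniteDimensional ℝ V] where
  /-- the set of roots Δ -/
  Δ : Finset V
  /-- the set of positive roots Δ₊ -/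
  Pos : Finset V
  /-- the highest root θ -/
  θ : V
  zero_not_mem : (0 : V) ∉ Δ
  span_eq_top : Submodule.span ℝ (Δ : Set V) = ⊤
  neg_mem : ∀ α ∈ Δ, -α ∈ Δ
  reflect_mem : ∀ α ∈ Δ, ∀ β ∈ Δ,
    β - (2 * (inner ℝ β α : ℝ) / (inner ℝ α α : ℝ)) • α ∈ Δ
  integral : ∀ α ∈ Δ, ∀ β ∈ Δ, ∃ n : ℤ, 2 * (inner ℝ β α : ℝ) / (inner ℝ α α : ℝ) = (n : ℝ)
  reduced : ∀ α ∈ Δ, ∀ t : ℝ, t • α ∈ Δ → t = 1 ∨ t = -1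
  /-- irreducibility (simplicity of the Lie algebra) -/
  irreducible : ∀ s ⊆ Δ, (∀ α ∈ s, ∀ β ∈ Δ, β ∉ s → (inner ℝ α β : ℝ) = 0) →
    s = ∅ ∨ s = Δ
  pos_subset : Pos ⊆ Δ
  pos_iff : ∀ α ∈ Δ, α ∈ Pos ↔ -α ∉ Pos
  pos_add : ∀ α ∈ Pos, ∀ β ∈ Pos, α + β ∈ Δ → α + β ∈ Pos
  θ_pos : θ ∈ Pos
  /-- θ is the highest root -/
  θ_highest : ∀ α ∈ Pos, θ + α ∉ Δ
  /-- normalization (θ,θ) = 2 -/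
  θ_norm : (inner ℝ θ θ : ℝ) = 2

namespace SimpleRootData

variable {V : Type*} [NormedAddCommGroup V] [InnerProductSpace ℝ V]
  [FiniteDimensional ℝ V] (D : SimpleRootData V)

/-- ρ, half the sum of the positive roots. -/
noncomputable def ρ : V := (2 : ℝ)⁻¹ • ∑ α ∈ D.Pos, α

/-- The dual Coxeter number h∨ = (ρ,θ) + 1. -/
noncomputable def h : ℝ := (inner ℝ D.ρ D.θ : ℝ) + 1

/-- The reflection r_θ in the highest root θ. -/
noncomputable def rθ (x : V) : V := x - (2 * (inner ℝ x D.θ : ℝ) / (inner ℝ D.θ D.θ : ℝ)) • D.θ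

/-- A positive root α is *special* if θ − α is also a root. -/
def IsSpecial (α : V) : Prop := α ∈ D.Pos ∧ D.θ - α ∈ D.Δ

/-- The set of special roots. -/
noncomputable def specials : Finset V :=
  D.Pos.filter fun α => D.θ - α ∈ D.Δ

/-- The set of positive roots not orthogonal to θ. -/
noncomputable def nonOrth : Finset V :=
  D.Pos.filter fun α => (inner ℝ α D.θ : ℝ) ≠ 0

end SimpleRootData

open SimpleRootData

variable {V : Type*} [NormedAddCommGroup V] [InnerProductSpace ℝ V]
  [FiniteDimensional ℝ V]

namespace SimpleRootData

variable (D : SimpleRootData V)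

lemma root_ne_zero {x : V} (hx : x ∈ D.Δ) : x ≠ 0 :=
  fun h => D.zero_not_mem (h ▸ hx)

lemma root_inner_self_pos {x : V} (hx : x ∈ D.Δ) : 0 < ⟪x, x⟫ :=
  lt_of_le_of_ne real_inner_self_nonneg
    (Ne.symm (inner_self_ne_zero.2 (D.root_ne_zero hx)))

lemma theta_mem : D.θ ∈ D.Δ := D.pos_subset D.θ_pos

lemma neg_theta_not_pos : -D.θ ∉ D.Pos := (D.pos_iff _ D.theta_mem).1 D.θ_pos

lemma inner_theta_int {x : V} (hx : x ∈ D.Δ) : ∃ n : ℤ, ⟪x, D.θ⟫ = (n : ℝ) := by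
  obtain ⟨n, hn⟩ := D.integral D.θ D.theta_mem x hx
  refine ⟨n, ?_⟩
  rw [← hn, D.θ_norm]
  ring

/-- Strict Cauchy–Schwarz for non-proportional roots. -/
lemma cs_strict {x y : V} (hx : x ∈ D.Δ) (hy : y ∈ D.Δ) (h1 : x ≠ y) (h2 : x ≠ -y) :
    ⟪x, y⟫ ^ 2 < ⟪x, x⟫ * ⟪y, y⟫ := by
  have hy0 : y ≠ 0 := D.root_ne_zero hy
  have hny : (0 : ℝ) < ‖y‖ := norm_pos_iff.2 hy0
  have key : ∀ z : V, z ∈ D.Δ → z ≠ y → ⟪z, y⟫ < ‖z‖ * ‖y‖ := by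
    intro z hz hzy
    rw [inner_lt_norm_mul_iff_real]
    intro h
    have hnz : (0 : ℝ) < ‖z‖ := norm_pos_iff.2 (D.root_ne_zero hz)
    have hzt : (‖z‖ / ‖y‖) • y = z := by
      rw [div_eq_inv_mul, mul_smul, ← h, inv_smul_smul₀ (ne_of_gt hny)]
    rcases D.reduced y hy (‖z‖ / ‖y‖) (by rw [hzt]; exact hz) with ht | ht
    · exact hzy (by rw [← hzt, ht, one_smul])
    · have : (0 : ℝ) < ‖z‖ / ‖y‖ := div_pos hnz hny
      rw [ht] at this; linarith
  have k1 := key x hx h1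
  have k2 := key (-x) (D.neg_mem x hx) (fun h => h2 (by rw [← h, neg_neg]))
  rw [inner_neg_left, norm_neg] at k2
  have habs : |⟪x, y⟫| < ‖x‖ * ‖y‖ := abs_lt.2 ⟨by linarith, k1⟩
  have hsq : ⟪x, y⟫ ^ 2 < (‖x‖ * ‖y‖) ^ 2 := by
    rw [← sq_abs]
    exact pow_lt_pow_left₀ habs (abs_nonneg _) (by norm_num)
  calc ⟪x, y⟫ ^ 2 < (‖x‖ * ‖y‖) ^ 2 := hsq
    _ = (‖x‖ * ‖x‖) * (‖y‖ * ‖y‖) := by ring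
    _ = ⟪x, x⟫ * ⟪y, y⟫ := by
        rw [real_inner_self_eq_norm_mul_norm, real_inner_self_eq_norm_mul_norm]

/-- If two roots have negative inner product and are not opposite, their sum is a root. -/
lemma add_mem_of_inner_neg {x y : V} (hx : x ∈ D.Δ) (hy : y ∈ D.Δ)
    (hneg : ⟪x, y⟫ < 0) (hne : x ≠ -y) : x + y ∈ D.Δ := by
  have hxy : x ≠ y := by
    rintro rfl
    exact absurd hneg (not_lt.2 (D.root_inner_self_pos hx).le)
  have hxx := D.root_inner_self_pos hx
  have hyy := D.root_inner_self_pos hy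
  obtain ⟨p, hp⟩ := D.integral y hy x hx
  obtain ⟨q, hq⟩ := D.integral x hx y hy
  have hyx : ⟪y, x⟫ = ⟪x, y⟫ := real_inner_comm x y
  have hp0 : (p : ℝ) < 0 := by
    rw [← hp]; exact div_neg_of_neg_of_pos (by linarith) hyy
  have hq0 : (q : ℝ) < 0 := by
    rw [← hq, hyx]; exact div_neg_of_neg_of_pos (by linarith) hxx
  have hp1 : p ≤ -1 := by have : p < 0 := by exact_mod_cast hp0
                          omega
  have hq1 : q ≤ -1 := by have : q < 0 := by exact_mod_cast hq0
                          omega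
  have hcs := D.cs_strict hx hy hxy hne
  have hpq : (p : ℝ) * q < 4 := by
    rw [← hp, ← hq, hyx]
    rw [div_mul_div_comm]
    rw [div_lt_iff₀ (by positivity)]
    nlinarith
  have hpq' : p * q < 4 := by exact_mod_cast hpq
  have hcase : p = -1 ∨ q = -1 := by
    by_contra hc
    push_neg at hc
    have : p ≤ -2 := by omega
    have : q ≤ -2 := by omega
    nlinarith
  rcases hcase with hpe | hqe
  · have := D.reflect_mem y hy x hx
    rw [hp, hpe] at this
    simpa [sub_eq_add_neg, neg_smul] using this
  · have := D.reflect_mem x hx y hy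
    rw [hq, hqe] at this
    rw [add_comm]
    simpa [sub_eq_add_neg, neg_smul] using this

lemma inner_theta_nonneg {α : V} (hα : α ∈ D.Pos) : 0 ≤ ⟪α, D.θ⟫ := by
  by_contra h
  push_neg at h
  have hne : α ≠ -D.θ := fun h' => D.neg_theta_not_pos (h' ▸ hα)
  have hmem := D.add_mem_of_inner_neg (D.pos_subset hα) D.theta_mem h hne
  rw [add_comm] at hmem
  exact D.θ_highest α hα hmem

lemma inner_theta_le_one {α : V} (hα : α ∈ D.Pos) (hne : α ≠ D.θ) : ⟪α, D.θ⟫ ≤ 1 := by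
  by_contra hgt
  push_neg at hgt
  have hαΔ := D.pos_subset hα
  have hne' : α ≠ -D.θ := fun h => D.neg_theta_not_pos (h ▸ hα)
  obtain ⟨n, hn⟩ := D.inner_theta_int hαΔ
  have hn1 : (1 : ℝ) < n := hn ▸ hgt
  have hn2 : 2 ≤ n := by have : 1 < n := by exact_mod_cast hn1
                         omega
  obtain ⟨m, hm⟩ := D.integral α hαΔ D.θ D.theta_mem
  have hαα := D.root_inner_self_pos hαΔ
  have hθα : ⟪D.θ, α⟫ = ⟪α, D.θ⟫ := real_inner_comm _ _
  have hm0 : (0 : ℝ) < m := by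
    rw [← hm, hθα]; exact div_pos (by linarith) hαα
  have hm1 : 1 ≤ m := by have : 0 < m := by exact_mod_cast hm0
                         omega
  have hcs := D.cs_strict hαΔ D.theta_mem hne hne'
  rw [D.θ_norm] at hcs
  have hnm : (n : ℝ) * m < 4 := by
    rw [← hn, ← hm, hθα]
    rw [mul_div_assoc', div_lt_iff₀ hαα]
    nlinarith
  have hnm' : n * m < 4 := by exact_mod_cast hnm
  have hn3 : n ≤ 3 := by nlinarith
  -- the basic reflection : α - n θ is a root
  have hrefl := D.reflect_mem D.θ D.theta_mem α hαΔ
  rw [D.θ_norm] at hrefl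
  have hco : 2 * ⟪α, D.θ⟫ / 2 = (n : ℝ) := by rw [hn]; ring
  rw [hco] at hrefl
  -- θ - α is never equal to θ, and α ≠ 2θ
  have hα2θ : α ≠ (2 : ℝ) • D.θ := by
    intro h
    rcases D.reduced D.θ D.theta_mem 2 (h ▸ hαΔ) with h2 | h2 <;> norm_num at h2
  -- step: α - θ is a root
  have hβ1 : α - D.θ ∈ D.Δ := by
    rcases (by omega : n = 2 ∨ n = 3) with h2 | h3
    · rw [h2] at hrefl
      push_cast at hrefl
      have hin : ⟪α - (2 : ℝ) • D.θ, D.θ⟫ < 0 := by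
        rw [inner_sub_left, real_inner_smul_left, D.θ_norm, hn, h2]
        norm_num
      have hne2 : α - (2 : ℝ) • D.θ ≠ -D.θ := by
        intro h
        apply hne
        have : α = -D.θ + (2 : ℝ) • D.θ := by rw [← h]; module
        rw [this]; module
      have := D.add_mem_of_inner_neg hrefl D.theta_mem hin hne2
      have heq : α - (2 : ℝ) • D.θ + D.θ = α - D.θ := by module
      rwa [heq] at this
    · rw [h3] at hrefl
      push_cast at hrefl
      have hin : ⟪α - (3 : ℝ) • D.θ, D.θ⟫ < 0 := by
        rw [inner_sub_left, real_inner_smul_left, D.θ_norm, hn, h3]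
        norm_num
      have hne3 : α - (3 : ℝ) • D.θ ≠ -D.θ := by
        intro h
        apply hα2θ
        have : α = -D.θ + (3 : ℝ) • D.θ := by rw [← h]; module
        rw [this]; module
      have hβ2 := D.add_mem_of_inner_neg hrefl D.theta_mem hin hne3
      have heq : α - (3 : ℝ) • D.θ + D.θ = α - (2 : ℝ) • D.θ := by module
      rw [heq] at hβ2
      have hin2 : ⟪α - (2 : ℝ) • D.θ, D.θ⟫ < 0 := by
        rw [inner_sub_left, real_inner_smul_left, D.θ_norm, hn, h3]
        norm_num
      have hne2 : α - (2 : ℝ) • D.θ ≠ -D.θ := by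
        intro h
        apply hne
        have : α = -D.θ + (2 : ℝ) • D.θ := by rw [← h]; module
        rw [this]; module
      have := D.add_mem_of_inner_neg hβ2 D.theta_mem hin2 hne2
      have heq2 : α - (2 : ℝ) • D.θ + D.θ = α - D.θ := by module
      rwa [heq2] at this
  by_cases hb : α - D.θ ∈ D.Pos
  · refine D.θ_highest _ hb ?_
    have heq : D.θ + (α - D.θ) = α := by module
    rwa [heq]
  · have hgΔ : D.θ - α ∈ D.Δ := by
      have := D.neg_mem _ hβ1
      rwa [neg_sub] at this
    have hg : D.θ - α ∈ D.Pos := by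
      by_contra hg
      exact hb ((D.pos_iff _ hβ1).2 (by rwa [neg_sub]))
    refine D.θ_highest _ hg ?_
    -- need : θ + (θ - α) ∈ Δ
    rcases (by omega : n = 2 ∨ n = 3) with h2 | h3
    · -- here necessarily m = 1, so ⟪α,α⟫ = 4
      have hme : m = 1 := by rw [h2] at hnm'; omega
      have hαα4 : ⟪α, α⟫ = 4 := by
        have := hm
        rw [hme, hθα, hn, h2] at this
        push_cast at this
        field_simp at this
        linarith
      have hγγ : ⟪D.θ - α, D.θ - α⟫ = 2 := by
        rw [inner_sub_left, inner_sub_right, inner_sub_right, D.θ_norm, hαα4,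
          hθα, hn, h2]
        norm_num
      have hαγ : ⟪α, D.θ - α⟫ = -2 := by
        rw [inner_sub_right, hαα4, hn, h2]
        norm_num
      have := D.reflect_mem _ hgΔ α hαΔ
      rw [hαγ, hγγ] at this
      have hco2 : 2 * (-2 : ℝ) / 2 = -2 := by norm_num
      rw [hco2] at this
      have heq : α - (-2 : ℝ) • (D.θ - α) = D.θ + (D.θ - α) := by module
      rwa [heq] at this
    · have hin : ⟪D.θ - α, D.θ⟫ < 0 := by
        rw [inner_sub_left, D.θ_norm, hn, h3]
        norm_num
      have hne3 : D.θ - α ≠ -D.θ := by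
        intro h
        apply hα2θ
        apply eq_of_sub_eq_zero
        have heq : α - (2 : ℝ) • D.θ = -(D.θ - α) - D.θ := by module
        rw [heq, h]
        module
      have := D.add_mem_of_inner_neg hgΔ D.theta_mem hin hne3
      rwa [add_comm] at this

end SimpleRootData

/-- the dimension of the minimal nonzero nilpotent adjoint orbit
equals 2h∨ − 2.  Here `d` is the dimension of the minimal nilpotent orbit,
which (Lemma 4.3.5 of Collingwood–McGovern, as recalled in the context)
equals one plus the number of positive roots not orthogonal to θ. -/
theorem dim_minimal_nilpotent_orbit (D : SimpleRootData V) (d : ℕ)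
    (hd : d = 1 + D.nonOrth.card) :
    (d : ℝ) = 2 * D.h - 2 := by
  have hθn : D.θ ∈ D.nonOrth :=
    Finset.mem_filter.2 ⟨D.θ_pos, by rw [D.θ_norm]; norm_num⟩
  have hcard : 1 ≤ D.nonOrth.card := Finset.card_pos.2 ⟨D.θ, hθn⟩
  -- the sum over positive roots of ⟪α,θ⟫ equals card nonOrth + 1
  have hsum : ∑ α ∈ D.Pos, ⟪α, D.θ⟫ = (D.nonOrth.card : ℝ) + 1 := by
    have h1 : ∑ α ∈ D.Pos, ⟪α, D.θ⟫ = ∑ α ∈ D.nonOrth, ⟪α, D.θ⟫ := by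
      refine (Finset.sum_subset (Finset.filter_subset _ _) ?_).symm
      intro x hx hnx
      by_contra h
      exact hnx (Finset.mem_filter.2 ⟨hx, h⟩)
    rw [h1, ← Finset.add_sum_erase _ _ hθn, D.θ_norm]
    have h2 : ∀ α ∈ D.nonOrth.erase D.θ, ⟪α, D.θ⟫ = 1 := by
      intro α hα
      have hne := Finset.ne_of_mem_erase hα
      have hα' := Finset.mem_filter.1 (Finset.mem_of_mem_erase hα)
      obtain ⟨n, hn⟩ := D.inner_theta_int (D.pos_subset hα'.1)
      have h0 : (0 : ℝ) ≤ n := hn ▸ D.inner_theta_nonneg hα'.1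
      have hle : (n : ℝ) ≤ 1 := hn ▸ D.inner_theta_le_one hα'.1 hne
      have hne0 : (n : ℝ) ≠ 0 := hn ▸ hα'.2
      have h0' : (0 : ℤ) ≤ n := by exact_mod_cast h0
      have hle' : n ≤ 1 := by exact_mod_cast hle
      have hne0' : n ≠ 0 := by exact_mod_cast hne0
      rw [hn]
      have : n = 1 := by omega
      rw [this]; norm_num
    rw [Finset.sum_congr rfl h2, Finset.sum_const, Finset.card_erase_of_mem hθn,
      nsmul_eq_mul, mul_one, Nat.cast_sub hcard]
    push_cast
    ring
  have hρ : ⟪D.ρ, D.θ⟫ = 2⁻¹ * ∑ α ∈ D.Pos, ⟪α, D.θ⟫ := by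
    rw [ρ, real_inner_smul_left, sum_inner]
  rw [hd, h, hρ, hsum]
  push_cast
  ring
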